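/- Let γ and μ be BCA-updates, i.e., maps sending each g : Y × Y → ℝ to a pair of unary vectors (γ_u[g], γ_v[g]) ∈ ℝ^Y × ℝ^Y such that min_{(s,t)} [g(s,t) − γ_u[g](s) − γ_v[g](t)] = 0, and similarly for μ. Suppose γ dominates μ (γ_u[g] ≥ μ_u[g] and γ_v[g] ≥ μ_v[g] componentwise for every g) and μ is monotonous (θ_u ≥ θ'_u and θ_v ≥ θ'_v componentwise implies μ[θ_u + θ_uv + θ_v] ≥ μ[θ'_u + θ_uv + θ'_v] componentwise, for every θ_uv). Then for any pairwise graphical model (V, E, Y, θ) and any ordering of E in which each edge occurs exactly once, the dual value after the BCA-iteration that processes every edge with γ is at least the dual value after the BCA-iteration that processes every edge in the same order with μ: D(α) ≥ D(β). -/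

import Mathlib

/-- Minimum of a real-valued function over a finite nonempty type. -/
noncomputable def fmin {Y : Type*} [Fintype Y] [Nonempty Y] (f : Y → ℝ) : ℝ :=
  Finset.univ.inf' Finset.univ_nonempty f

/-- The cost vector of a pairwise graphical model: unary costs for every vertex and
pairwise costs for every (potential) edge. -/
structure Costs (V Y : Type*) where
  un : V → Y → ℝ
  pw : V × V → Y × Y → ℝ

/-- The dual value `D(θ) = Σ_u min_s θ_u(s) + Σ_{uv∈E} min_{(s,t)} θ_uv(s,t)`. -/
noncomputable def dual {V Y : Type*} [Fintype V] [Fintype Y] [Nonempty Y]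
    (E : Finset (V × V)) (c : Costs V Y) : ℝ :=
  (∑ u, fmin (c.un u)) + ∑ e ∈ E, fmin (c.pw e)

/-- One MPLP++ edge update of the cost vector at edge `e = (u,v)`. -/
noncomputable def processEdge {V Y : Type*} [Fintype Y] [Nonempty Y] [DecidableEq V]
    (c : Costs V Y) (e : V × V) : Costs V Y :=
  let g : Y × Y → ℝ := fun p => c.un e.1 p.1 + c.un e.2 p.2 + c.pw e p
  let θM : Y → ℝ := fun s => (1 / 2) * fmin (fun t => g (s, t))
  let θHv : Y → ℝ := fun t => fmin (fun s => g (s, t) - θM s)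
  let θHu : Y → ℝ := fun s => fmin (fun t => g (s, t) - θHv t)
  { un := fun w => if w = e.1 then θHu else if w = e.2 then θHv else c.un w
    pw := fun e' => if e' = e then (fun p => g p - θHu p.1 - θHv p.2) else c.pw e' }

/-- One MPLP++ iteration `H`: process all edges in the given fixed order. -/
noncomputable def mplppIter {V Y : Type*} [Fintype Y] [Nonempty Y] [DecidableEq V]
    (order : List (V × V)) (c : Costs V Y) : Costs V Y :=
  order.foldl processEdge c

/-- One generic BCA edge update of the cost vector at edge `e = (u,v)`, using the
reparametrization mapping `γ` sending the aggregated cost to the new unary vectors. -/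
noncomputable def processEdgeWith {V Y : Type*} [Fintype Y] [Nonempty Y] [DecidableEq V]
    (γ : (Y × Y → ℝ) → (Y → ℝ) × (Y → ℝ)) (c : Costs V Y) (e : V × V) : Costs V Y :=
  let g : Y × Y → ℝ := fun p => c.un e.1 p.1 + c.un e.2 p.2 + c.pw e p
  { un := fun w => if w = e.1 then (γ g).1 else if w = e.2 then (γ g).2 else c.un w
    pw := fun e' => if e' = e then (fun p => g p - (γ g).1 p.1 - (γ g).2 p.2) else c.pw e' }

lemma fmin_mono {Y : Type*} [Fintype Y] [Nonempty Y] {f g : Y → ℝ}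
    (h : ∀ x, f x ≤ g x) : fmin f ≤ fmin g := by
  obtain ⟨x, -, hx⟩ := Finset.exists_mem_eq_inf' (Finset.univ_nonempty (α := Y)) g
  calc fmin f ≤ f x := Finset.inf'_le _ (Finset.mem_univ x)
    _ ≤ g x := h x
    _ = fmin g := hx.symm

lemma fold_inv {V Y : Type*} [Fintype Y] [Nonempty Y] [DecidableEq V]
    (γ μ : (Y × Y → ℝ) → (Y → ℝ) × (Y → ℝ))
    (hγbca : ∀ g : Y × Y → ℝ, fmin (fun p : Y × Y => g p - (γ g).1 p.1 - (γ g).2 p.2) = 0)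
    (hμbca : ∀ g : Y × Y → ℝ, fmin (fun p : Y × Y => g p - (μ g).1 p.1 - (μ g).2 p.2) = 0)
    (hdom : ∀ g : Y × Y → ℝ,
      (∀ s, (μ g).1 s ≤ (γ g).1 s) ∧ (∀ t, (μ g).2 t ≤ (γ g).2 t))
    (hmono : ∀ (θu θu' θv θv' : Y → ℝ) (θuv : Y × Y → ℝ),
      (∀ s, θu' s ≤ θu s) → (∀ t, θv' t ≤ θv t) →
      (∀ s, (μ (fun p => θu' p.1 + θv' p.2 + θuv p)).1 s ≤
            (μ (fun p => θu p.1 + θv p.2 + θuv p)).1 s) ∧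
      (∀ t, (μ (fun p => θu' p.1 + θv' p.2 + θuv p)).2 t ≤
            (μ (fun p => θu p.1 + θv p.2 + θuv p)).2 t)) :
    ∀ (l : List (V × V)), l.Nodup → ∀ (cγ cμ : Costs V Y),
      (∀ u s, cμ.un u s ≤ cγ.un u s) →
      (∀ e ∈ l, cγ.pw e = cμ.pw e) →
      (∀ u s, (l.foldl (processEdgeWith μ) cμ).un u s ≤
              (l.foldl (processEdgeWith γ) cγ).un u s) ∧
      (∀ e ∈ l, fmin ((l.foldl (processEdgeWith γ) cγ).pw e) = 0 ∧
                fmin ((l.foldl (processEdgeWith μ) cμ).pw e) = 0) ∧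
      (∀ e ∉ l, (l.foldl (processEdgeWith γ) cγ).pw e = cγ.pw e ∧
                (l.foldl (processEdgeWith μ) cμ).pw e = cμ.pw e) := by
  intro l
  induction l with
  | nil =>
    intro _ cγ cμ Hun _
    refine ⟨Hun, by simp, by simp⟩
  | cons e rest ih =>
    intro hnd cγ cμ Hun Hpw
    have hnd' : rest.Nodup := hnd.of_cons
    have henr : e ∉ rest := (List.nodup_cons.mp hnd).1
    set gγ : Y × Y → ℝ := fun p => cγ.un e.1 p.1 + cγ.un e.2 p.2 + cγ.pw e p with hgγ
    set gμ : Y × Y → ℝ := fun p => cμ.un e.1 p.1 + cμ.un e.2 p.2 + cμ.pw e p with hgμ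
    have hpe : cγ.pw e = cμ.pw e := Hpw e (List.mem_cons_self (a := e) (l := rest))
    -- μ gμ ≤ μ gγ componentwise
    have hμmono := hmono (cγ.un e.1) (cμ.un e.1) (cγ.un e.2) (cμ.un e.2) (cγ.pw e)
      (fun s => Hun e.1 s) (fun t => Hun e.2 t)
    have hgμ' : gμ = fun p => cμ.un e.1 p.1 + cμ.un e.2 p.2 + cγ.pw e p := by
      rw [hpe]
    set cγ' := processEdgeWith γ cγ e with hcγ'
    set cμ' := processEdgeWith μ cμ e with hcμ'
    have hunγ' : cγ'.un = fun w =>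
        if w = e.1 then (γ gγ).1 else if w = e.2 then (γ gγ).2 else cγ.un w := rfl
    have hunμ' : cμ'.un = fun w =>
        if w = e.1 then (μ gμ).1 else if w = e.2 then (μ gμ).2 else cμ.un w := rfl
    have hpwγ' : cγ'.pw = fun e' =>
        if e' = e then (fun p => gγ p - (γ gγ).1 p.1 - (γ gγ).2 p.2) else cγ.pw e' := rfl
    have hpwμ' : cμ'.pw = fun e' =>
        if e' = e then (fun p => gμ p - (μ gμ).1 p.1 - (μ gμ).2 p.2) else cμ.pw e' := rfl
    have Hun' : ∀ u s, cμ'.un u s ≤ cγ'.un u s := by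
      intro u s
      rw [hunγ', hunμ']
      by_cases h1 : u = e.1
      · simp only [if_pos h1]
        exact le_trans (by rw [hgμ']; exact hμmono.1 s) ((hdom gγ).1 s)
      · by_cases h2 : u = e.2
        · simp only [if_neg h1, if_pos h2]
          exact le_trans (by rw [hgμ']; exact hμmono.2 s) ((hdom gγ).2 s)
        · simp only [if_neg h1, if_neg h2]
          exact Hun u s
    have Hpw' : ∀ e' ∈ rest, cγ'.pw e' = cμ'.pw e' := by
      intro e' he'
      have hne : e' ≠ e := fun h => henr (h ▸ he')
      rw [hpwγ', hpwμ']
      simp only [if_neg hne]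
      exact Hpw e' (List.mem_cons_of_mem _ he')
    obtain ⟨IH1, IH2, IH3⟩ := ih hnd' cγ' cμ' Hun' Hpw'
    simp only [List.foldl_cons]
    refine ⟨IH1, ?_, ?_⟩
    · intro e' he'
      rcases List.mem_cons.mp he' with h | h
      · subst h
        obtain ⟨h3γ, h3μ⟩ := IH3 e' henr
        rw [h3γ, h3μ, hpwγ', hpwμ']
        simp only [if_pos rfl]
        exact ⟨hγbca gγ, hμbca gμ⟩
      · exact IH2 e' h
    · intro e' he'
      have h1 : e' ≠ e := fun h => he' (h ▸ List.mem_cons_self (a := e) (l := rest))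
      have h2 : e' ∉ rest := fun h => he' (List.mem_cons_of_mem _ h)
      obtain ⟨h3γ, h3μ⟩ := IH3 e' h2
      rw [h3γ, h3μ, hpwγ', hpwμ']
      simp [if_neg h1]

/-- If the BCA-update `γ` dominates the BCA-update `μ` and `μ` is monotonous, then a
BCA-iteration (processing every edge once, in a fixed order) with `γ` dominates a
BCA-iteration with `μ` in the dual objective. -/
theorem iteration_dominance {V Y : Type*} [Fintype V] [Fintype Y] [Nonempty Y] [DecidableEq V]
    (E : Finset (V × V)) (hE : ∀ e ∈ E, e.1 ≠ e.2)
    (γ μ : (Y × Y → ℝ) → (Y → ℝ) × (Y → ℝ))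
    (hγbca : ∀ g : Y × Y → ℝ, fmin (fun p : Y × Y => g p - (γ g).1 p.1 - (γ g).2 p.2) = 0)
    (hμbca : ∀ g : Y × Y → ℝ, fmin (fun p : Y × Y => g p - (μ g).1 p.1 - (μ g).2 p.2) = 0)
    (hdom : ∀ g : Y × Y → ℝ,
      (∀ s, (μ g).1 s ≤ (γ g).1 s) ∧ (∀ t, (μ g).2 t ≤ (γ g).2 t))
    (hmono : ∀ (θu θu' θv θv' : Y → ℝ) (θuv : Y × Y → ℝ),
      (∀ s, θu' s ≤ θu s) → (∀ t, θv' t ≤ θv t) →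
      (∀ s, (μ (fun p => θu' p.1 + θv' p.2 + θuv p)).1 s ≤
            (μ (fun p => θu p.1 + θv p.2 + θuv p)).1 s) ∧
      (∀ t, (μ (fun p => θu' p.1 + θv' p.2 + θuv p)).2 t ≤
            (μ (fun p => θu p.1 + θv p.2 + θuv p)).2 t))
    (order : List (V × V)) (horder : ∀ e, e ∈ order ↔ e ∈ E) (hnodup : order.Nodup)
    (c : Costs V Y) :
    dual E (order.foldl (processEdgeWith μ) c) ≤ dual E (order.foldl (processEdgeWith γ) c) := by
  obtain ⟨H1, H2, -⟩ := fold_inv γ μ hγbca hμbca hdom hmono order hnodup c c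
    (fun _ _ => le_rfl) (fun _ _ => rfl)
  unfold dual
  have hA : ∑ u, fmin ((order.foldl (processEdgeWith μ) c).un u) ≤
      ∑ u, fmin ((order.foldl (processEdgeWith γ) c).un u) :=
    Finset.sum_le_sum fun u _ => fmin_mono (H1 u)
  have hB : ∑ e ∈ E, fmin ((order.foldl (processEdgeWith μ) c).pw e) =
      ∑ e ∈ E, fmin ((order.foldl (processEdgeWith γ) c).pw e) := by
    refine Finset.sum_congr rfl fun e he => ?_
    obtain ⟨hg, hm⟩ := H2 e ((horder e).mpr he)
    rw [hg, hm]
  linarith
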